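/- Let n be even, let φ = ψ₁ ∧ ⋯ ∧ ψ_k be a 3CNF formula over variables p₁,…,p_n where each clause ψ_i = ℓ_{i1} ∨ ℓ_{i2} ∨ ℓ_{i3} contains three literals on three distinct variables, and let f be a propositional variable distinct from p₁,…,p_n. Then the quantified Boolean formula ∃p₁∀p₂∃p₃⋯∃p_{n-1}∀p_n φ is true if and only if the poor man's formula g = φ_exp ∧ ⋀_{i=1}^k label_false(ℓ̄_{i1} ∧ ℓ̄_{i2} ∧ ℓ̄_{i3}) ∧ (◇□)^{n/2} f̄ is satisfiable with respect to F≤2, where φ_exp = ⋀_{i=1}^n □^{i-1}(◇□^{n-i} p_i ∧ ◇□^{n-i} p̄_i), ℓ̄ denotes the complementary literal of ℓ, and for literals with variables p_a, p_b, p_c (a < b < c), label_false(ℓ₁ ∧ ℓ₂ ∧ ℓ₃) = □^{a-1}◇□^{b-a-1}◇□^{c-b-1}◇□^{n-c}(ℓ₁ ∧ ℓ₂ ∧ ℓ₃ ∧ f). -/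

import Mathlib

namespace PoorMansModal

/-- Modal formulas over propositional variables of type `α`: variables `p`,
negated variables `p̄`, general negation, conjunction, disjunction, box, diamond,
and the constants `true` and `false`. -/
inductive Fml (α : Type) : Type where
  | var : α → Fml α
  | nvar : α → Fml α
  | neg : Fml α → Fml α
  | and : Fml α → Fml α → Fml α
  | or : Fml α → Fml α → Fml α
  | box : Fml α → Fml α
  | dia : Fml α → Fml α
  | tru : Fml α
  | fls : Fml α

/-- A Kripke model: a nonempty set of worlds, an accessibility relation, and a valuation. -/
structure Kripke (α : Type) where
  World : Type
  nonempty : Nonempty World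
  R : World → World → Prop
  V : α → World → Prop

/-- Truth of a formula at a world of a model. -/
def Sat {α : Type} (M : Kripke α) : Fml α → M.World → Prop
  | .var p, w => M.V p w
  | .nvar p, w => ¬ M.V p w
  | .neg φ, w => ¬ Sat M φ w
  | .and φ ψ, w => Sat M φ w ∧ Sat M ψ w
  | .or φ ψ, w => Sat M φ w ∨ Sat M ψ w
  | .box φ, w => ∀ v, M.R w v → Sat M φ v
  | .dia φ, w => ∃ v, M.R w v ∧ Sat M φ v
  | .tru, _ => True
  | .fls, _ => False

/-- Modal depth: depth of nesting of `□` and `◇`. -/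
def mdep {α : Type} : Fml α → ℕ
  | .var _ => 0
  | .nvar _ => 0
  | .neg φ => mdep φ
  | .and φ ψ => max (mdep φ) (mdep ψ)
  | .or φ ψ => max (mdep φ) (mdep ψ)
  | .box φ => mdep φ + 1
  | .dia φ => mdep φ + 1
  | .tru => 0
  | .fls => 0

/-- Conjunction of a list of formulas; the empty conjunction is the always-true formula. -/
def bigConj {α : Type} : List (Fml α) → Fml α
  | [] => .tru
  | [φ] => φ
  | φ :: rest => .and φ (bigConj rest)

/-- `□^k φ`. -/
def boxI {α : Type} : ℕ → Fml α → Fml α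
  | 0, φ => φ
  | k + 1, φ => .box (boxI k φ)

/-- `◇^k φ`. -/
def diaI {α : Type} : ℕ → Fml α → Fml α
  | 0, φ => φ
  | k + 1, φ => .dia (diaI k φ)

/-- `(◇□)^k φ`. -/
def diaBoxI {α : Type} : ℕ → Fml α → Fml α
  | 0, φ => φ
  | k + 1, φ => .dia (.box (diaBoxI k φ))

/-- The literal with variable `l.1` and sign `l.2` (`true` = positive). -/
def litF {α : Type} (l : α × Bool) : Fml α := if l.2 then .var l.1 else .nvar l.1

/-- The variable `p` occurs in the formula. -/
def occursV {α : Type} (p : α) : Fml α → Prop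
  | .var q => p = q
  | .nvar q => p = q
  | .neg φ => occursV p φ
  | .and φ ψ => occursV p φ ∨ occursV p ψ
  | .or φ ψ => occursV p φ ∨ occursV p ψ
  | .box φ => occursV p φ
  | .dia φ => occursV p φ
  | .tru => False
  | .fls => False

/-- Poor man's formulas: built from literals, `∧`, `□`, `◇` only. -/
def PoorF {α : Type} : Fml α → Prop
  | .var _ => True
  | .nvar _ => True
  | .and φ ψ => PoorF φ ∧ PoorF ψ
  | .box φ => PoorF φ
  | .dia φ => PoorF φ
  | _ => False

/-- Formulas of the language `L`: built from literals, `∧`, `∨`, `□`, `◇`. -/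
def InL {α : Type} : Fml α → Prop
  | .var _ => True
  | .nvar _ => True
  | .and φ ψ => InL φ ∧ InL ψ
  | .or φ ψ => InL φ ∧ InL ψ
  | .box φ => InL φ
  | .dia φ => InL φ
  | _ => False

/-- Every world has at most one successor. -/
def AtMostOne {W : Type} (R : W → W → Prop) : Prop :=
  ∀ w v v', R w v → R w v' → v = v'

/-- Every world has at least one successor. -/
def AtLeastOne {W : Type} (R : W → W → Prop) : Prop :=
  ∀ w, ∃ v, R w v

/-- Every world has at most two successors. -/
def AtMostTwo {W : Type} (R : W → W → Prop) : Prop :=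
  ∀ w v₁ v₂ v₃, R w v₁ → R w v₂ → R w v₃ → v₁ = v₂ ∨ v₁ = v₃ ∨ v₂ = v₃

/-- `chainR R n w v`: there is an `R`-path of length exactly `n` from `w` to `v`. -/
def chainR {W : Type} (R : W → W → Prop) : ℕ → W → W → Prop
  | 0, w, v => w = v
  | k + 1, w, v => ∃ u, R w u ∧ chainR R k u v

/-- `R` is the parent-child relation of a rooted tree with root `root`
in which every node has at most two children. -/
structure IsBinTree {W : Type} (R : W → W → Prop) (root : W) : Prop where
  reach : ∀ w, Relation.ReflTransGen R root w
  root_no_parent : ∀ w, ¬ R w root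
  unique_parent : ∀ w v v', R v w → R v' w → v = v'
  acyclic : ∀ w, ¬ Relation.TransGen R w w
  at_most_two_children : ∀ w v₁ v₂ v₃, R w v₁ → R w v₂ → R w v₃ → v₁ = v₂ ∨ v₁ = v₃ ∨ v₂ = v₃

/-- `φ_exp = ⋀_{i=1}^n □^{i-1}(◇□^{n-i} p_i ∧ ◇□^{n-i} p̄_i)`, with `p_i = var i`. -/
def phiExp (n : ℕ) : Fml ℕ :=
  bigConj ((List.range n).map (fun j =>
    boxI j (.and (.dia (boxI (n - 1 - j) (.var (j + 1))))
                 (.dia (boxI (n - 1 - j) (.nvar (j + 1)))))))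

/-- Satisfiability with respect to the class of all frames. -/
def SatAll (φ : Fml ℕ) : Prop := ∃ (M : Kripke ℕ) (w : M.World), Sat M φ w

/-- Satisfiability with respect to `F≤1`. -/
def SatLe1 (φ : Fml ℕ) : Prop := ∃ M : Kripke ℕ, AtMostOne M.R ∧ ∃ w, Sat M φ w

/-- Satisfiability with respect to `F≥1`. -/
def SatGe1 (φ : Fml ℕ) : Prop := ∃ M : Kripke ℕ, AtLeastOne M.R ∧ ∃ w, Sat M φ w

/-- Satisfiability with respect to `F≤2`. -/
def SatLe2 (φ : Fml ℕ) : Prop := ∃ M : Kripke ℕ, AtMostTwo M.R ∧ ∃ w, Sat M φ w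

/-- A one-world model with no successors, realizing the boolean assignment `v`;
truth at its world is propositional truth for formulas without modal operators. -/
def propModel (v : ℕ → Bool) : Kripke ℕ :=
  { World := Unit, nonempty := ⟨()⟩, R := fun _ _ => False, V := fun p _ => v p = true }

/-- Propositional satisfaction of `φ` under the assignment `v`. -/
def PropSat (v : ℕ → Bool) (φ : Fml ℕ) : Prop := Sat (propModel v) φ ()


/-- Propositional formulas: no modal operators (and no general negation or constants). -/
def IsProp : Fml ℕ → Prop
  | .var _ => True
  | .nvar _ => True
  | .and φ ψ => IsProp φ ∧ IsProp ψ
  | .or φ ψ => IsProp φ ∧ IsProp ψ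
  | _ => False

/-- `qbfTrue φ i k v`: truth of the quantified Boolean formula with `k` remaining
alternating quantifiers over the variables `i, i+1, …, i+k-1` (existential at odd
indices, universal at even indices), with matrix `φ`, under the current assignment `v`.
Starting it as `qbfTrue φ 1 n v` gives the truth of `∃p₁ ∀p₂ ∃p₃ ⋯ ∀p_n φ` for even `n`. -/
def qbfTrue (φ : Fml ℕ) : ℕ → ℕ → (ℕ → Bool) → Prop
  | _, 0, v => PropSat v φ
  | i, k + 1, v =>
      if i % 2 = 1 then ∃ b, qbfTrue φ (i + 1) k (Function.update v i b)
      else ∀ b, qbfTrue φ (i + 1) k (Function.update v i b)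

/-- `label_false(ℓ₁ ∧ ℓ₂ ∧ ℓ₃) =
□^{a-1} ◇ □^{b-a-1} ◇ □^{c-b-1} ◇ □^{n-c} (ℓ₁ ∧ ℓ₂ ∧ ℓ₃ ∧ f)`, where the literals
`ℓ₁, ℓ₂, ℓ₃` have variables `a, b, c` and signs `s₁, s₂, s₃`, and `fv` is the
variable `f`. -/
def labelFalse (n a b c : ℕ) (s₁ s₂ s₃ : Bool) (fv : ℕ) : Fml ℕ :=
  boxI (a - 1) (.dia (boxI (b - a - 1) (.dia (boxI (c - b - 1) (.dia (boxI (n - c)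
    (.and (litF (a, s₁)) (.and (litF (b, s₂)) (.and (litF (c, s₃)) (.var fv))))))))))

section Lemmas
variable {α : Type} {M : Kripke α}

theorem Sat_bigConj {L : List (Fml α)} {w : M.World} :
    Sat M (bigConj L) w ↔ ∀ φ ∈ L, Sat M φ w := by
  induction L with
  | nil => simp [bigConj, Sat]
  | cons φ rest ih =>
    cases rest with
    | nil => simp [bigConj]
    | cons ψ rest' =>
      show Sat M (.and φ (bigConj (ψ :: rest'))) w ↔ _
      simp only [Sat, ih, List.mem_cons]
      constructor
      · rintro ⟨h1, h2⟩ χ (rfl | h) <;> [exact h1; exact h2 _ (by simpa using h)]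
      · intro h; exact ⟨h _ (Or.inl rfl), fun χ hχ => h _ (Or.inr hχ)⟩

theorem Sat_boxI {m : ℕ} {φ : Fml α} {w : M.World} :
    Sat M (boxI m φ) w ↔ ∀ v, chainR M.R m w v → Sat M φ v := by
  induction m generalizing w with
  | zero =>
    constructor
    · intro h v hv; cases hv; exact h
    · intro h; exact h w rfl
  | succ m ih =>
    show Sat M (.box (boxI m φ)) w ↔ _
    simp only [Sat, ih, chainR]
    constructor
    · rintro h v ⟨u, hu, hc⟩; exact h u hu v hc
    · intro h u hu v hc; exact h v ⟨u, hu, hc⟩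

theorem chainR_append {R : M.World → M.World → Prop} {m₁ m₂ : ℕ} {w v : M.World} :
    chainR R (m₁ + m₂) w v ↔ ∃ u, chainR R m₁ w u ∧ chainR R m₂ u v := by
  induction m₁ generalizing w with
  | zero => simp [chainR]
  | succ m ih =>
    rw [Nat.succ_add]
    show (∃ u, R w u ∧ chainR R (m + m₂) u v) ↔ _
    constructor
    · rintro ⟨u, hu, hc⟩
      obtain ⟨x, hx1, hx2⟩ := ih.1 hc
      exact ⟨x, ⟨u, hu, hx1⟩, hx2⟩
    · rintro ⟨x, ⟨u, hu, hc⟩, hx2⟩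
      exact ⟨u, hu, ih.2 ⟨x, hc, hx2⟩⟩

end Lemmas
section Lemmas2
variable {α : Type} {M : Kripke α}

theorem Sat_litF {p : α} {s : Bool} {w : M.World} :
    Sat M (litF (p, s)) w ↔ (M.V p w ↔ s = true) := by
  cases s <;> simp [litF, Sat]

theorem PropSat_litF {v : ℕ → Bool} {p : ℕ} {s : Bool} :
    PropSat v (litF (p, s)) ↔ v p = s := by
  cases s <;> simp [PropSat, litF, Sat, propModel]

theorem qbfTrue_succ (φ : Fml ℕ) (i k : ℕ) (v : ℕ → Bool) :
    qbfTrue φ i (k+1) v = if i % 2 = 1 then ∃ b, qbfTrue φ (i+1) k (Function.update v i b)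
      else ∀ b, qbfTrue φ (i+1) k (Function.update v i b) := rfl

/-- The forward model's accessibility relation. -/
def fwdR (n : ℕ) (s t : List Bool) : Prop := s.length < n ∧ ∃ bo, t = s ++ [bo]

def falsifies (a b c : ℕ) (s₁ s₂ s₃ : Bool) (t : List Bool) : Prop :=
  t.getD (a-1) false = !s₁ ∧ t.getD (b-1) false = !s₂ ∧ t.getD (c-1) false = !s₃

abbrev fwdM (n k : ℕ) (a b c : Fin k → ℕ) (s₁ s₂ s₃ : Fin k → Bool) (fv : ℕ) : Kripke ℕ :=
  { World := List Bool, nonempty := ⟨[]⟩, R := fwdR n,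
    V := fun p t => if p = fv then
        ∃ i : Fin k, falsifies (a i) (b i) (c i) (s₁ i) (s₂ i) (s₃ i) t
      else t.getD (p-1) false = true }

theorem fwdR_atMostTwo (n : ℕ) : AtMostTwo (fwdR n) := by
  rintro w v₁ v₂ v₃ ⟨_, b₁, rfl⟩ ⟨_, b₂, rfl⟩ ⟨_, b₃, rfl⟩
  cases b₁ <;> cases b₂ <;> cases b₃ <;> simp

theorem fwd_chain_of {n : ℕ} : ∀ (l s : List Bool), s.length + l.length ≤ n →
    chainR (fwdR n) l.length s (s ++ l) := by
  intro l
  induction l with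
  | nil => intro s _; simp [chainR]
  | cons bo l ih =>
    intro s h
    refine ⟨s ++ [bo], ⟨by simp at h ⊢; omega, bo, rfl⟩, ?_⟩
    have := ih (s ++ [bo]) (by simp at h ⊢; omega)
    simpa using this

theorem fwd_chain_to {n : ℕ} : ∀ (m : ℕ) (s x : List Bool), chainR (fwdR n) m s x →
    ∃ l, x = s ++ l ∧ l.length = m := by
  intro m
  induction m with
  | zero => intro s x h; exact ⟨[], by cases h; simp, rfl⟩
  | succ m ih =>
    rintro s x ⟨u, ⟨_, bo, rfl⟩, hc⟩
    obtain ⟨l, rfl, hl⟩ := ih _ _ hc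
    exact ⟨bo :: l, by simp, by simp [hl]⟩

theorem getD_mid {x l : List Bool} {bo : Bool} {j : ℕ} (h : x.length = j) :
    (x ++ bo :: l).getD j false = bo := by
  subst h
  rw [List.getD_append_right _ _ _ _ le_rfl]
  simp

end Lemmas2
section Fwd
variable {n k : ℕ} {a b c : Fin k → ℕ} {s₁ s₂ s₃ : Fin k → Bool} {fv : ℕ}

theorem fwd_phiExp (hfv : ∀ p, 1 ≤ p → p ≤ n → fv ≠ p) :
    Sat (fwdM n k a b c s₁ s₂ s₃ fv) (phiExp n) ([] : List Bool) := by
  rw [phiExp, Sat_bigConj]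
  intro φ hφ
  simp only [List.mem_map, List.mem_range] at hφ
  obtain ⟨j, hj, rfl⟩ := hφ
  rw [Sat_boxI]
  intro x hx
  obtain ⟨l, rfl, hl⟩ := fwd_chain_to _ _ _ hx
  have hne : ¬ (j + 1 = fv) := fun h => hfv (j+1) (by omega) (by omega) h.symm
  constructor
  · refine ⟨x ++ [true], ⟨by omega, true, rfl⟩, ?_⟩
    rw [Sat_boxI]
    intro y hy
    obtain ⟨l', rfl, _⟩ := fwd_chain_to _ _ _ hy
    show (fwdM n k a b c s₁ s₂ s₃ fv).V (j+1) _
    simp only [fwdM, if_neg hne]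
    rw [List.append_assoc x [true] l']
    simpa using getD_mid (x := x) (l := l') (bo := true) hl
  · refine ⟨x ++ [false], ⟨by omega, false, rfl⟩, ?_⟩
    rw [Sat_boxI]
    intro y hy
    obtain ⟨l', rfl, _⟩ := fwd_chain_to _ _ _ hy
    show ¬ (fwdM n k a b c s₁ s₂ s₃ fv).V (j+1) _
    simp only [fwdM, if_neg hne]
    rw [List.append_assoc x [false] l']
    simp only [List.singleton_append, show j + 1 - 1 = j from rfl]
    rw [getD_mid hl]
    simp

end Fwd
section Fwd2
variable {n k : ℕ} {a b c : Fin k → ℕ} {s₁ s₂ s₃ : Fin k → Bool} {fv : ℕ}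

theorem fwd_labelFalse (i : Fin k)
    (hr : 1 ≤ a i ∧ a i < b i ∧ b i < c i ∧ c i ≤ n)
    (hfv : ∀ p, 1 ≤ p → p ≤ n → fv ≠ p) :
    Sat (fwdM n k a b c s₁ s₂ s₃ fv)
      (labelFalse n (a i) (b i) (c i) (!(s₁ i)) (!(s₂ i)) (!(s₃ i)) fv)
      ([] : List Bool) := by
  obtain ⟨h1, h2, h3, h4⟩ := hr
  have hneA : ¬ (a i = fv) := fun h => hfv (a i) (by omega) (by omega) h.symm
  have hneB : ¬ (b i = fv) := fun h => hfv (b i) (by omega) (by omega) h.symm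
  have hneC : ¬ (c i = fv) := fun h => hfv (c i) (by omega) (by omega) h.symm
  rw [labelFalse, Sat_boxI]
  intro x hx
  obtain ⟨l₁, rfl, hl⟩ := fwd_chain_to _ _ _ hx
  refine ⟨x ++ [!(s₁ i)], ⟨by omega, _, rfl⟩, ?_⟩
  rw [Sat_boxI]
  intro y hy
  obtain ⟨l₂, rfl, hl₂⟩ := fwd_chain_to _ _ _ hy
  refine ⟨x ++ [!(s₁ i)] ++ l₂ ++ [!(s₂ i)], ⟨by simp; omega, _, rfl⟩, ?_⟩
  rw [Sat_boxI]
  intro z hz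
  obtain ⟨l₃, rfl, hl₃⟩ := fwd_chain_to _ _ _ hz
  refine ⟨x ++ [!(s₁ i)] ++ l₂ ++ [!(s₂ i)] ++ l₃ ++ [!(s₃ i)], ⟨by simp; omega, _, rfl⟩, ?_⟩
  rw [Sat_boxI]
  intro u hu
  obtain ⟨l₄, rfl, hl₄⟩ := fwd_chain_to _ _ _ hu
  have e1 : x ++ [!(s₁ i)] ++ l₂ ++ [!(s₂ i)] ++ l₃ ++ [!(s₃ i)] ++ l₄
      = x ++ (!(s₁ i)) :: ((l₂ ++ (!(s₂ i)) :: (l₃ ++ (!(s₃ i)) :: l₄))) := by simp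
  have e2 : x ++ [!(s₁ i)] ++ l₂ ++ [!(s₂ i)] ++ l₃ ++ [!(s₃ i)] ++ l₄
      = (x ++ (!(s₁ i)) :: l₂) ++ (!(s₂ i)) :: (l₃ ++ (!(s₃ i)) :: l₄) := by simp
  have e3 : x ++ [!(s₁ i)] ++ l₂ ++ [!(s₂ i)] ++ l₃ ++ [!(s₃ i)] ++ l₄
      = ((x ++ (!(s₁ i)) :: l₂) ++ (!(s₂ i)) :: l₃) ++ (!(s₃ i)) :: l₄ := by simp
  have hq2 : (x ++ (!(s₁ i)) :: l₂).length = b i - 1 := by simp [hl, hl₂]; omega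
  have hq3 : ((x ++ (!(s₁ i)) :: l₂) ++ (!(s₂ i)) :: l₃).length = c i - 1 := by
    simp [hl, hl₂, hl₃]; omega
  have g1 : (x ++ [!(s₁ i)] ++ l₂ ++ [!(s₂ i)] ++ l₃ ++ [!(s₃ i)] ++ l₄).getD (a i - 1) false
      = !(s₁ i) := by rw [e1]; exact getD_mid hl
  have g2 : (x ++ [!(s₁ i)] ++ l₂ ++ [!(s₂ i)] ++ l₃ ++ [!(s₃ i)] ++ l₄).getD (b i - 1) false
      = !(s₂ i) := by rw [e2]; exact getD_mid hq2
  have g3 : (x ++ [!(s₁ i)] ++ l₂ ++ [!(s₂ i)] ++ l₃ ++ [!(s₃ i)] ++ l₄).getD (c i - 1) false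
      = !(s₃ i) := by rw [e3]; exact getD_mid hq3
  refine ⟨?_, ?_, ?_, ?_⟩
  · rw [Sat_litF]
    show (if a i = fv then _ else _) ↔ _
    rw [if_neg hneA, g1]
  · rw [Sat_litF]
    show (if b i = fv then _ else _) ↔ _
    rw [if_neg hneB, g2]
  · rw [Sat_litF]
    show (if c i = fv then _ else _) ↔ _
    rw [if_neg hneC, g3]
  · show (if fv = fv then _ else _)
    rw [if_pos rfl]
    exact ⟨i, g1, g2, g3⟩

end Fwd2
section Fwd3
variable {n k : ℕ} {a b c : Fin k → ℕ} {s₁ s₂ s₃ : Fin k → Bool} {fv : ℕ}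

def matrixF (k : ℕ) (a b c : Fin k → ℕ) (s₁ s₂ s₃ : Fin k → Bool) : Fml ℕ :=
  bigConj ((List.finRange k).map (fun i =>
    .or (litF (a i, s₁ i)) (.or (litF (b i, s₂ i)) (litF (c i, s₃ i)))))

theorem PropSat_matrix {v : ℕ → Bool} :
    PropSat v (matrixF k a b c s₁ s₂ s₃) ↔
      ∀ i, v (a i) = s₁ i ∨ v (b i) = s₂ i ∨ v (c i) = s₃ i := by
  rw [matrixF]
  show Sat _ _ _ ↔ _
  refine Iff.trans (Sat_bigConj (M := propModel v)) ?_
  constructor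
  · intro h i
    have := h _ (List.mem_map.2 ⟨i, List.mem_finRange i, rfl⟩)
    rcases this with h' | h' | h'
    · exact Or.inl (PropSat_litF.1 h')
    · exact Or.inr (Or.inl (PropSat_litF.1 h'))
    · exact Or.inr (Or.inr (PropSat_litF.1 h'))
  · intro h φ hφ
    simp only [List.mem_map] at hφ
    obtain ⟨i, _, rfl⟩ := hφ
    rcases h i with h' | h' | h'
    · exact Or.inl (PropSat_litF.2 h')
    · exact Or.inr (Or.inl (PropSat_litF.2 h'))
    · exact Or.inr (Or.inr (PropSat_litF.2 h'))

theorem fwd_diaBox (hn : Even n)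
    (hrange : ∀ i, 1 ≤ a i ∧ a i < b i ∧ b i < c i ∧ c i ≤ n) :
    ∀ (m : ℕ) (t : List Bool) (v : ℕ → Bool), 2*m ≤ n → t.length = n - 2*m →
    (∀ p, 1 ≤ p → p ≤ n - 2*m → t.getD (p-1) false = v p) →
    qbfTrue (matrixF k a b c s₁ s₂ s₃) (n - 2*m + 1) (2*m) v →
    Sat (fwdM n k a b c s₁ s₂ s₃ fv) (diaBoxI m (.nvar fv)) t := by
  intro m
  induction m with
  | zero =>
    intro t v _ hlen hag hq
    simp only [Nat.mul_zero, Nat.sub_zero] at hlen hag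
    have hq2 : PropSat v (matrixF k a b c s₁ s₂ s₃) := hq
    show ¬ (fwdM n k a b c s₁ s₂ s₃ fv).V fv t
    simp only [fwdM, if_pos rfl]
    rintro ⟨i, g1, g2, g3⟩
    obtain ⟨h1, h2, h3, h4⟩ := hrange i
    rcases PropSat_matrix.1 hq2 i with h | h | h
    · rw [hag (a i) (by omega) (by omega), h] at g1; simp at g1
    · rw [hag (b i) (by omega) (by omega), h] at g2; simp at g2
    · rw [hag (c i) (by omega) (by omega), h] at g3; simp at g3
  | succ m ih =>
    intro t v hm hlen hag hq
    obtain ⟨r, hrn⟩ := hn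
    rw [show 2*(m+1) = 2*m+1+1 by ring] at hq
    rw [show n - (2*m+1+1) + 1 = n - 2*m - 1 by omega] at hq
    rw [qbfTrue_succ, if_pos (by omega : (n - 2*m - 1) % 2 = 1)] at hq
    obtain ⟨bb, hb⟩ := hq
    rw [qbfTrue_succ, if_neg (by omega : ¬ (n - 2*m - 1 + 1) % 2 = 1)] at hb
    refine ⟨t ++ [bb], ⟨by omega, _, rfl⟩, ?_⟩
    intro u hu
    obtain ⟨_, bb', rfl⟩ := hu
    have hq' := hb bb'
    rw [show n - 2*m - 1 + 1 + 1 = n - 2*m + 1 by omega] at hq'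
    apply ih (t ++ [bb] ++ [bb'])
      (Function.update (Function.update v (n-2*m-1) bb) (n-2*m-1+1) bb')
      (by omega) (by simp [hlen]; omega) ?_ hq'
    intro p hp1 hp2
    by_cases hpa : p ≤ n - 2*(m+1)
    · rw [List.getD_append _ _ _ _ (by simp [hlen]; omega),
        List.getD_append _ _ _ _ (by simp [hlen]; omega),
        hag p hp1 hpa,
        Function.update_of_ne (by omega), Function.update_of_ne (by omega)]
    · by_cases hpb : p = n - 2*m - 1
      · have e : t ++ [bb] ++ [bb'] = t ++ bb :: [bb'] := by simp
        rw [e, getD_mid (by omega : t.length = p - 1),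
          Function.update_of_ne (by omega), hpb, Function.update_self]
      · have hpc : p = n - 2*m := by omega
        have e : t ++ [bb] ++ [bb'] = (t ++ [bb]) ++ bb' :: [] := rfl
        rw [e, getD_mid (by simp [hlen]; omega : (t ++ [bb]).length = p - 1),
          show p = n - 2*m - 1 + 1 by omega, Function.update_self]

end Fwd3
section Bwd
variable {M : Kripke ℕ} {n : ℕ} {w0 : M.World}

/-- `v` is a successor of `u` (a world at depth `j`) all of whose depth-`n`
descendants give `p_{j+1}` the value `bo`. -/
def BSucc (M : Kripke ℕ) (n j : ℕ) (u v : M.World) (bo : Bool) : Prop :=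
  M.R u v ∧ ∀ x, chainR M.R (n-1-j) v x → (M.V (j+1) x ↔ bo = true)

theorem bwd_branch (hphi : Sat M (phiExp n) w0) {j : ℕ} (hj : j < n) {u : M.World}
    (hu : chainR M.R j w0 u) (bo : Bool) : ∃ v, BSucc M n j u v bo := by
  have h := Sat_bigConj.1 hphi _
    (List.mem_map.2 ⟨j, List.mem_range.2 hj, rfl⟩)
  rw [Sat_boxI] at h
  obtain ⟨⟨v₁, hv₁, h₁⟩, ⟨v₂, hv₂, h₂⟩⟩ := h u hu
  rw [Sat_boxI] at h₁ h₂
  cases bo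
  · exact ⟨v₂, hv₂, fun x hx => by simpa [Sat] using h₂ x hx⟩
  · exact ⟨v₁, hv₁, fun x hx => by simpa [Sat] using h₁ x hx⟩

theorem bwd_desc (hphi : Sat M (phiExp n) w0) :
    ∀ (d j : ℕ) (u : M.World), chainR M.R j w0 u → j + d ≤ n →
      ∃ x, chainR M.R d u x := by
  intro d
  induction d with
  | zero => exact fun j u _ _ => ⟨u, rfl⟩
  | succ d ih =>
    intro j u hu hle
    obtain ⟨v, hv, -⟩ := bwd_branch hphi (by omega : j < n) hu true
    obtain ⟨x, hx⟩ := ih (j+1) v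
      (chainR_append.2 ⟨u, hu, v, hv, rfl⟩) (by omega)
    exact ⟨x, v, hv, hx⟩

theorem bwd_ne (hphi : Sat M (phiExp n) w0) {j : ℕ} (hj : j < n) {u v₁ v₂ : M.World}
    (hu : chainR M.R j w0 u) (h₁ : BSucc M n j u v₁ true) (h₂ : BSucc M n j u v₂ false) :
    v₁ ≠ v₂ := by
  rintro rfl
  obtain ⟨x, hx⟩ := bwd_desc hphi (n-1-j) (j+1) v₁
    (chainR_append.2 ⟨u, hu, v₁, h₁.1, rfl⟩) (by omega)
  have t1 := (h₁.2 x hx).2 rfl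
  simpa using (h₂.2 x hx).1 t1

theorem bwd_classify (hphi : Sat M (phiExp n) w0) (hM2 : AtMostTwo M.R)
    {j : ℕ} (hj : j < n) {u v : M.World} (hu : chainR M.R j w0 u) (hv : M.R u v) :
    ∃ bo, BSucc M n j u v bo := by
  obtain ⟨vt, hvt⟩ := bwd_branch hphi hj hu true
  obtain ⟨vf, hvf⟩ := bwd_branch hphi hj hu false
  rcases hM2 u v vt vf hv hvt.1 hvf.1 with h | h | h
  · exact ⟨true, h ▸ hvt⟩
  · exact ⟨false, h ▸ hvf⟩
  · exact absurd h (bwd_ne hphi hj hu hvt hvf)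

theorem bwd_same (hphi : Sat M (phiExp n) w0) (hM2 : AtMostTwo M.R)
    {j : ℕ} (hj : j < n) {u z q xz xq : M.World} {bo : Bool}
    (hu : chainR M.R j w0 u) (hz : M.R u z) (hq : M.R u q)
    (hxz : chainR M.R (n-1-j) z xz) (hvz : M.V (j+1) xz ↔ bo = true)
    (hxq : chainR M.R (n-1-j) q xq) (hvq : M.V (j+1) xq ↔ bo = true) :
    z = q := by
  obtain ⟨v', hv'⟩ := bwd_branch hphi hj hu (!bo)
  rcases hM2 u z q v' hz hq hv'.1 with h | h | h
  · exact h
  · exfalso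
    have := hv'.2 xz (h ▸ hxz)
    rw [hvz] at this
    cases bo <;> simp_all
  · exfalso
    have := hv'.2 xq (h ▸ hxq)
    rw [hvq] at this
    cases bo <;> simp_all

end Bwd
section Bwd2
variable {M : Kripke ℕ} {n : ℕ} {w0 : M.World}

theorem chainR_one {R : M.World → M.World → Prop} {w v : M.World} :
    chainR R 1 w v ↔ R w v := by
  constructor
  · rintro ⟨u, h, rfl⟩; exact h
  · intro h; exact ⟨v, h, rfl⟩

theorem chainR_snoc {R : M.World → M.World → Prop} {m : ℕ} {w u v : M.World}
    (h1 : chainR R m w u) (h2 : R u v) : chainR R (m+1) w v :=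
  chainR_append.2 ⟨u, h1, chainR_one.2 h2⟩

theorem bwd_ex (hphi : Sat M (phiExp n) w0) {d e : ℕ} {z : M.World}
    (hz : chainR M.R d w0 z) (hde : d + e ≤ n) {ψ : Fml ℕ}
    (hsat : Sat M (boxI e ψ) z) :
    ∃ x, chainR M.R e z x ∧ Sat M ψ x ∧ chainR M.R (d+e) w0 x := by
  obtain ⟨x, hx⟩ := bwd_desc hphi e d z hz hde
  exact ⟨x, hx, Sat_boxI.1 hsat x hx, chainR_append.2 ⟨z, hz, hx⟩⟩

theorem bwd_probe2 (hphi : Sat M (phiExp n) w0) {B C : ℕ} {body : Fml ℕ}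
    (hr : B < C ∧ C ≤ n) {z : M.World} (hz : chainR M.R B w0 z)
    (hsat : Sat M (boxI (C-B-1) (.dia (boxI (n-C) body))) z) :
    ∃ x, chainR M.R (n-B) z x ∧ Sat M body x := by
  obtain ⟨hBC, hCn⟩ := hr
  obtain ⟨y3, hc3, hs3, hd3⟩ := bwd_ex hphi hz (by omega) hsat
  obtain ⟨z3, hr3, hs3'⟩ := hs3
  have hd3' : chainR M.R (B + (C-B-1) + 1) w0 z3 := chainR_snoc hd3 hr3
  obtain ⟨x, hc4, hs4, _⟩ := bwd_ex hphi hd3' (by omega) hs3'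
  refine ⟨x, ?_, hs4⟩
  rw [show n - B = (C-B-1) + (1 + (n-C)) by omega]
  exact chainR_append.2 ⟨y3, hc3, chainR_append.2 ⟨z3, chainR_one.2 hr3, hc4⟩⟩

theorem bwd_probe3 (hphi : Sat M (phiExp n) w0) {A B C : ℕ} {body : Fml ℕ}
    (hr : A < B ∧ B < C ∧ C ≤ n) {z : M.World} (hz : chainR M.R A w0 z)
    (hsat : Sat M (boxI (B-A-1) (.dia (boxI (C-B-1) (.dia (boxI (n-C) body))))) z) :
    ∃ x, chainR M.R (n-A) z x ∧ Sat M body x := by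
  obtain ⟨hAB, hBC, hCn⟩ := hr
  obtain ⟨y2, hc2, hs2, hd2⟩ := bwd_ex hphi hz (by omega) hsat
  obtain ⟨z2, hr2, hs2'⟩ := hs2
  have hd2' : chainR M.R (A + (B-A-1) + 1) w0 z2 := chainR_snoc hd2 hr2
  have hB : A + (B-A-1) + 1 = B := by omega
  rw [hB] at hd2'
  obtain ⟨x, hcx, hsx⟩ := bwd_probe2 hphi ⟨hBC, hCn⟩ hd2' hs2'
  refine ⟨x, ?_, hsx⟩
  rw [show n - A = (B-A-1) + (1 + (n-B)) by omega]
  exact chainR_append.2 ⟨y2, hc2, chainR_append.2 ⟨z2, chainR_one.2 hr2, hcx⟩⟩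

theorem bwd_label (hphi : Sat M (phiExp n) w0) (hM2 : AtMostTwo M.R)
    {A B C : ℕ} {ta tb tc : Bool} {fv : ℕ}
    (hr : 1 ≤ A ∧ A < B ∧ B < C ∧ C ≤ n)
    (hlab : Sat M (labelFalse n A B C ta tb tc fv) w0)
    {u : M.World} (hu : chainR M.R n w0 u)
    (hA : M.V A u ↔ ta = true) (hB : M.V B u ↔ tb = true) (hC : M.V C u ↔ tc = true) :
    M.V fv u := by
  obtain ⟨h1, h2, h3, h4⟩ := hr
  have hu' : chainR M.R ((A-1) + (1 + ((B-A-1) + (1 + ((C-B-1) + (1 + (n-C))))))) w0 u := by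
    rwa [show (A-1) + (1 + ((B-A-1) + (1 + ((C-B-1) + (1 + (n-C)))))) = n by omega]
  obtain ⟨y1, hy1, hrest⟩ := chainR_append.1 hu'
  obtain ⟨qa, hqa, hrest⟩ := chainR_append.1 hrest
  obtain ⟨y2, hy2, hrest⟩ := chainR_append.1 hrest
  obtain ⟨qb, hqb, hrest⟩ := chainR_append.1 hrest
  obtain ⟨y3, hy3, hrest⟩ := chainR_append.1 hrest
  obtain ⟨qc, hqc, hrest⟩ := chainR_append.1 hrest
  rw [chainR_one] at hqa hqb hqc
  have dqa : chainR M.R A w0 qa := by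
    have := chainR_snoc hy1 hqa; rwa [show A - 1 + 1 = A by omega] at this
  have dy2 : chainR M.R (B-1) w0 y2 := by
    have := chainR_append.2 ⟨qa, dqa, hy2⟩
    rwa [show A + (B-A-1) = B - 1 by omega] at this
  have dqb : chainR M.R B w0 qb := by
    have := chainR_snoc dy2 hqb; rwa [show B - 1 + 1 = B by omega] at this
  have dy3 : chainR M.R (C-1) w0 y3 := by
    have := chainR_append.2 ⟨qb, dqb, hy3⟩
    rwa [show B + (C-B-1) = C - 1 by omega] at this
  have dqc : chainR M.R C w0 qc := by
    have := chainR_snoc dy3 hqc; rwa [show C - 1 + 1 = C by omega] at this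
  have hqa_u : chainR M.R (n-A) qa u := by
    rw [show n - A = (B-A-1) + (1 + ((C-B-1) + (1 + (n-C)))) by omega]
    exact chainR_append.2 ⟨y2, hy2, chainR_append.2 ⟨qb, chainR_one.2 hqb,
      chainR_append.2 ⟨y3, hy3, chainR_append.2 ⟨qc, chainR_one.2 hqc, hrest⟩⟩⟩⟩
  have hqb_u : chainR M.R (n-B) qb u := by
    rw [show n - B = (C-B-1) + (1 + (n-C)) by omega]
    exact chainR_append.2 ⟨y3, hy3, chainR_append.2 ⟨qc, chainR_one.2 hqc, hrest⟩⟩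
  -- level A
  rw [labelFalse] at hlab
  obtain ⟨z, hz, hzs⟩ := Sat_boxI.1 hlab y1 hy1
  have dz : chainR M.R A w0 z := by
    have := chainR_snoc hy1 hz; rwa [show A - 1 + 1 = A by omega] at this
  obtain ⟨xz, hxz, hxs⟩ := bwd_probe3 hphi ⟨h2, h3, h4⟩ dz hzs
  obtain ⟨la, -⟩ := hxs
  rw [Sat_litF] at la
  have hzqa : z = qa := by
    refine bwd_same (bo := ta) (xz := xz) (xq := u) hphi hM2 (by omega : A - 1 < n) hy1 hz hqa ?_ ?_ ?_ ?_
    · rwa [show n - 1 - (A-1) = n - A by omega]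
    · rwa [show A - 1 + 1 = A by omega]
    · rwa [show n - 1 - (A-1) = n - A by omega]
    · rwa [show A - 1 + 1 = A by omega]
  subst hzqa
  -- level B
  obtain ⟨z', hz', hzs'⟩ := Sat_boxI.1 hzs y2 hy2
  have dz' : chainR M.R B w0 z' := by
    have := chainR_snoc dy2 hz'; rwa [show B - 1 + 1 = B by omega] at this
  obtain ⟨xz', hxz', hxs'⟩ := bwd_probe2 hphi ⟨h3, h4⟩ dz' hzs'
  obtain ⟨-, lb', -⟩ := hxs'
  rw [Sat_litF] at lb'
  have hzqb : z' = qb := by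
    refine bwd_same (bo := tb) (xz := xz') (xq := u) hphi hM2 (by omega : B - 1 < n) dy2 hz' hqb ?_ ?_ ?_ ?_
    · rwa [show n - 1 - (B-1) = n - B by omega]
    · rwa [show B - 1 + 1 = B by omega]
    · rwa [show n - 1 - (B-1) = n - B by omega]
    · rwa [show B - 1 + 1 = B by omega]
  subst hzqb
  -- level C
  obtain ⟨z'', hz'', hzs''⟩ := Sat_boxI.1 hzs' y3 hy3
  have dz'' : chainR M.R C w0 z'' := by
    have := chainR_snoc dy3 hz''; rwa [show C - 1 + 1 = C by omega] at this
  obtain ⟨xz'', hxz'', hxs'', -⟩ := bwd_ex hphi dz'' (by omega) hzs''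
  obtain ⟨-, -, lc'', -⟩ := hxs''
  rw [Sat_litF] at lc''
  have hzqc : z'' = qc := by
    refine bwd_same (bo := tc) (xz := xz'') (xq := u) hphi hM2 (by omega : C - 1 < n) dy3 hz'' hqc ?_ ?_ ?_ ?_
    · rwa [show n - 1 - (C-1) = n - C by omega]
    · rwa [show C - 1 + 1 = C by omega]
    · rwa [show n - 1 - (C-1) = n - C by omega]
    · rwa [show C - 1 + 1 = C by omega]
  subst hzqc
  exact (Sat_boxI.1 hzs'' u hrest).2.2.2

end Bwd2
section Bwd3
variable {M : Kripke ℕ} {n : ℕ} {w0 : M.World}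
variable {k : ℕ} {a b c : Fin k → ℕ} {s₁ s₂ s₃ : Fin k → Bool} {fv : ℕ}

theorem bwd_diaBox (hphi : Sat M (phiExp n) w0) (hM2 : AtMostTwo M.R) (hn : Even n)
    (hrange : ∀ i, 1 ≤ a i ∧ a i < b i ∧ b i < c i ∧ c i ≤ n)
    (hlabs : ∀ i, Sat M (labelFalse n (a i) (b i) (c i) (!(s₁ i)) (!(s₂ i)) (!(s₃ i)) fv) w0) :
    ∀ m, 2*m ≤ n → ∀ (u : M.World) (v : ℕ → Bool),
      chainR M.R (n - 2*m) w0 u →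
      (∀ p, 1 ≤ p → p ≤ n - 2*m → ∀ x, chainR M.R (2*m) u x → (M.V p x ↔ v p = true)) →
      Sat M (diaBoxI m (.nvar fv)) u →
      qbfTrue (matrixF k a b c s₁ s₂ s₃) (n - 2*m + 1) (2*m) v := by
  intro m
  induction m with
  | zero =>
    intro _ u v hu hag hsat
    simp only [Nat.mul_zero, Nat.sub_zero] at hu hag
    show PropSat v (matrixF k a b c s₁ s₂ s₃)
    refine PropSat_matrix.2 (fun i => ?_)
    by_contra hcon
    push_neg at hcon
    obtain ⟨e1, e2, e3⟩ := hcon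
    have v1 : v (a i) = !(s₁ i) := by revert e1; cases v (a i) <;> cases s₁ i <;> simp
    have v2 : v (b i) = !(s₂ i) := by revert e2; cases v (b i) <;> cases s₂ i <;> simp
    have v3 : v (c i) = !(s₃ i) := by revert e3; cases v (c i) <;> cases s₃ i <;> simp
    obtain ⟨h1, h2, h3, h4⟩ := hrange i
    have hf : M.V fv u := by
      refine bwd_label hphi hM2 ⟨h1, h2, h3, h4⟩ (hlabs i) hu ?_ ?_ ?_
      · rw [hag (a i) (by omega) (by omega) u rfl, v1]
      · rw [hag (b i) (by omega) (by omega) u rfl, v2]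
      · rw [hag (c i) (by omega) (by omega) u rfl, v3]
    exact hsat hf
  | succ m ih =>
    intro hm u v hu hag hsat
    obtain ⟨r, hrn⟩ := hn
    obtain ⟨z, hz, hzs⟩ := hsat
    have dz : chainR M.R (n - 2*m - 1) w0 z := by
      have := chainR_snoc hu hz
      rwa [show n - 2*(m+1) + 1 = n - 2*m - 1 by omega] at this
    obtain ⟨bb, hbbR, hbbV⟩ := bwd_classify hphi hM2 (by omega : n - 2*(m+1) < n) hu hz
    rw [show n - 1 - (n - 2*(m+1)) = 2*m+1 by omega,
      show n - 2*(m+1) + 1 = n - 2*m - 1 by omega] at hbbV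
    rw [show 2*(m+1) = 2*m+1+1 by ring, show n - (2*m+1+1) + 1 = n - 2*m - 1 by omega,
      qbfTrue_succ, if_pos (by omega : (n - 2*m - 1) % 2 = 1)]
    refine ⟨bb, ?_⟩
    rw [qbfTrue_succ, if_neg (by omega : ¬ (n - 2*m - 1 + 1) % 2 = 1)]
    intro bb'
    obtain ⟨z', hz'R, hz'V⟩ := bwd_branch hphi (by omega : n - 2*m - 1 < n) dz bb'
    rw [show n - 1 - (n - 2*m - 1) = 2*m by omega,
      show n - 2*m - 1 + 1 = n - 2*m by omega] at hz'V
    have dz' : chainR M.R (n - 2*m) w0 z' := by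
      have := chainR_snoc dz hz'R
      rwa [show n - 2*m - 1 + 1 = n - 2*m by omega] at this
    have goal := ih (by omega) z'
      (Function.update (Function.update v (n - 2*m - 1) bb) (n - 2*m - 1 + 1) bb')
      dz' ?_ (hzs z' hz'R)
    · rwa [show n - 2*m + 1 = n - 2*m - 1 + 1 + 1 by omega] at goal
    intro p hp1 hp2 x hx
    by_cases hpa : p ≤ n - 2*(m+1)
    · rw [Function.update_of_ne (by omega), Function.update_of_ne (by omega)]
      refine hag p hp1 hpa x ?_
      rw [show 2*(m+1) = 2*m+1+1 by ring]
      exact ⟨z, hz, z', hz'R, hx⟩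
    · by_cases hpb : p = n - 2*m - 1
      · rw [Function.update_of_ne (by omega), hpb, Function.update_self]
        exact hbbV x ⟨z', hz'R, hx⟩
      · rw [show p = n - 2*m - 1 + 1 by omega, Function.update_self,
          show n - 2*m - 1 + 1 = n - 2*m by omega]
        exact hz'V x hx

end Bwd3
theorem stmt13 (n : ℕ) (hn : Even n) (k : ℕ)
    (a b c : Fin k → ℕ) (s₁ s₂ s₃ : Fin k → Bool)
    (hrange : ∀ i, 1 ≤ a i ∧ a i < b i ∧ b i < c i ∧ c i ≤ n)
    (fv : ℕ) (hfv : ∀ p, 1 ≤ p → p ≤ n → fv ≠ p) :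
    qbfTrue
        (bigConj ((List.finRange k).map (fun i =>
          .or (litF (a i, s₁ i)) (.or (litF (b i, s₂ i)) (litF (c i, s₃ i))))))
        1 n (fun _ => false) ↔
      SatLe2 (.and (phiExp n)
        (.and
          (bigConj ((List.finRange k).map (fun i =>
            labelFalse n (a i) (b i) (c i) (!(s₁ i)) (!(s₂ i)) (!(s₃ i)) fv)))
          (diaBoxI (n / 2) (.nvar fv)))) := by
  obtain ⟨r, hrn⟩ := hn
  constructor
  · intro hq
    refine ⟨fwdM n k a b c s₁ s₂ s₃ fv, fwdR_atMostTwo n, ([] : List Bool),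
      fwd_phiExp hfv, ?_, ?_⟩
    · rw [Sat_bigConj]
      intro φ hφ
      simp only [List.mem_map] at hφ
      obtain ⟨i, -, rfl⟩ := hφ
      exact fwd_labelFalse i (hrange i) hfv
    · refine fwd_diaBox ⟨r, hrn⟩ hrange (n/2) [] (fun _ => false) (by omega)
        (by simp; omega) (fun p h1 h2 => absurd h2 (by omega)) ?_
      rw [show n - 2*(n/2) + 1 = 1 by omega, show 2*(n/2) = n by omega]
      exact hq
  · rintro ⟨M, hM2, w, hphi, hlabs, hdia⟩
    have hlabs' : ∀ i, Sat M
        (labelFalse n (a i) (b i) (c i) (!(s₁ i)) (!(s₂ i)) (!(s₃ i)) fv) w :=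
      fun i => Sat_bigConj.1 hlabs _ (List.mem_map.2 ⟨i, List.mem_finRange i, rfl⟩)
    have hchain : chainR M.R (n - 2*(n/2)) w w := by
      rw [show n - 2*(n/2) = 0 by omega]; rfl
    have := bwd_diaBox hphi hM2 ⟨r, hrn⟩ hrange hlabs' (n/2) (by omega) w
      (fun _ => false) hchain (fun p h1 h2 => absurd h2 (by omega)) hdia
    rwa [show n - 2*(n/2) + 1 = 1 by omega, show 2*(n/2) = n by omega] at this
end PoorMansModal
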